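/- arXiv:2012.01331 — 4 statements merged into one kernel-verified Lean document; each statement's English description precedes it below -/
import Mathlib

section
/- Let z > 0, λ > 0, and R ≥ 0 be real numbers with λ·(1+R) ≤ 1, and define F(γ) = λ/(1 + γz) + γ·(λ(1+R)·γ/(γ+z) − 1) for γ ≥ 0. Then F is strictly decreasing on [0, ∞). -/
/-- Monotonicity claim in the proof of Lemma `Suff`: under `λ(1+R) ≤ 1`, the function
`F(γ) = λ/(1+γz) + γ(λ(1+R)γ/(γ+z) − 1)` is strictly decreasing on `[0, ∞)`. -/
theorem informativeness_F_strictAnti (z lam R : ℝ)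
    (hz : 0 < z) (hlam : 0 < lam) (hR : 0 ≤ R) (hcost : lam * (1 + R) ≤ 1) :
    StrictAntiOn
      (fun gam : ℝ => lam / (1 + gam * z) + gam * (lam * (1 + R) * gam / (gam + z) - 1))
      (Set.Ici (0:ℝ)) := by
  intro a ha b hb hab
  simp only [Set.mem_Ici] at ha hb
  set c := lam * (1 + R) with hc
  have hc0 : 0 < c := by positivity
  have haz : 0 < a + z := by linarith
  have hbz : 0 < b + z := by linarith
  have h1a : 0 < 1 + a * z := by nlinarith
  have h1b : 0 < 1 + b * z := by nlinarith
  have hfirst : lam / (1 + b * z) < lam / (1 + a * z) := by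
    apply div_lt_div_of_pos_left hlam h1a
    nlinarith
  have hsecond : b * (c * b / (b + z) - 1) ≤ a * (c * a / (a + z) - 1) := by
    have e1 : b * (c * b / (b + z) - 1) = (c * b * b - b * (b + z)) / (b + z) := by
      field_simp
    have e2 : a * (c * a / (a + z) - 1) = (c * a * a - a * (a + z)) / (a + z) := by
      field_simp
    rw [e1, e2, div_le_div_iff₀ hbz haz]
    nlinarith [mul_nonneg (mul_nonneg ha hb) (sub_nonneg.2 hab.le),
      mul_nonneg (mul_nonneg hz.le hb) (sub_nonneg.2 hab.le),
      mul_nonneg (mul_nonneg hz.le ha) (sub_nonneg.2 hab.le),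
      mul_pos hz hz, sub_nonneg.2 hab.le, mul_nonneg ha hb]
  linarith
end

section
/- Let z, λ, R be real numbers with 0 < z < λ, R ≥ 0, and λ·(1+R) ≤ 1. Then there exists p̄ ∈ (1/2, 1] such that for all p with p̄ ≤ p ≤ 1, setting γ = (1−p)/p, the inequality z − λ/(1 + γz) ≤ γ·(λ(1+R)·γ/(γ+z) − 1) holds. -/
/-- Lemma `Suff`: if `z < λ` (and `λ(1+R) ≤ 1`), then the informativeness condition
holds for all sufficiently accurate signals `p`, where `γ = (1−p)/p`. -/
theorem informativeness_for_accurate_signals (z lam R : ℝ)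
    (hz : 0 < z) (hzlam : z < lam) (hR : 0 ≤ R) (hcost : lam * (1 + R) ≤ 1) :
    ∃ pbar ∈ Set.Ioc (1/2 : ℝ) 1, ∀ p : ℝ, pbar ≤ p → p ≤ 1 →
      z - lam / (1 + ((1 - p) / p) * z) ≤
        ((1 - p) / p) * (lam * (1 + R) * ((1 - p) / p) / (((1 - p) / p) + z) - 1) := by
  have hlz : 0 < lam - z := by linarith
  have hden : (0:ℝ) < 1 + z + z^2 := by nlinarith
  set δ : ℝ := min (1/2) ((lam - z)/(1+z+z^2)) with hδ
  have hδpos : 0 < δ := lt_min (by norm_num) (div_pos hlz hden)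
  have hδle : δ ≤ 1/2 := min_le_left _ _
  have hδle2 : δ * (1+z+z^2) ≤ lam - z := by
    have h := min_le_right (1/2 : ℝ) ((lam - z)/(1+z+z^2))
    rw [le_div_iff₀ hden] at h
    linarith [h]
  refine ⟨1/(1+δ), ⟨?_, ?_⟩, ?_⟩
  · rw [lt_div_iff₀ (by linarith)]; linarith
  · rw [div_le_one (by linarith)]; linarith
  intro p hp hp1
  have hpbar : (0:ℝ) < 1/(1+δ) := by positivity
  have hp0 : 0 < p := lt_of_lt_of_le hpbar hp
  set γ := (1-p)/p with hγ
  have hγ0 : 0 ≤ γ := div_nonneg (by linarith) hp0.le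
  have hγδ : γ ≤ δ := by
    rw [hγ, div_le_iff₀ hp0]
    have h := hp
    rw [div_le_iff₀ (by linarith : (0:ℝ) < 1 + δ)] at h
    nlinarith
  have hγh : γ ≤ 1/2 := le_trans hγδ hδle
  have h1 : (0:ℝ) < 1 + γ * z := by nlinarith
  have h2 : (0:ℝ) < γ + z := by linarith
  have key : z + γ ≤ lam / (1 + γ*z) := by
    rw [le_div_iff₀ h1]
    nlinarith [mul_le_mul_of_nonneg_right hγδ hden.le,
      mul_le_mul_of_nonneg_right hγh (mul_nonneg hγ0 hz.le), mul_nonneg hγ0 hz.le]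
  have hfrac : 0 ≤ lam * (1 + R) * γ / (γ + z) :=
    div_nonneg (mul_nonneg (by nlinarith) hγ0) h2.le
  have step1 : -γ ≤ γ * (lam * (1 + R) * γ / (γ + z) - 1) := by
    nlinarith [mul_nonneg hγ0 hfrac]
  linarith
end

section
/- Let γ > 0 and let z, z', λ, λ', R, R' be real numbers with z ≥ z' > 0, 0 < λ ≤ λ', and 0 ≤ R ≤ R'. If z − λ/(1 + γz) ≤ γ·(λ(1+R)·γ/(γ+z) − 1), then z' − λ'/(1 + γz') ≤ γ·(λ'(1+R')·γ/(γ+z') − 1). -/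
/-- Lemma `MON`: the informativeness condition is preserved when `λ` increases, `R`
increases, or the prior likelihood ratio `z` decreases. -/
theorem informativeness_monotone (gam z z' lam lam' R R' : ℝ)
    (hgam : 0 < gam) (hz' : 0 < z') (hzz : z' ≤ z)
    (hlam : 0 < lam) (hll : lam ≤ lam') (hR : 0 ≤ R) (hRR : R ≤ R')
    (h : z - lam / (1 + gam * z) ≤ gam * (lam * (1 + R) * gam / (gam + z) - 1)) :
    z' - lam' / (1 + gam * z') ≤ gam * (lam' * (1 + R') * gam / (gam + z') - 1) := by
  have hz : 0 < z := lt_of_lt_of_le hz' hzz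
  have hd1 : 0 < 1 + gam * z := by positivity
  have hd1' : 0 < 1 + gam * z' := by positivity
  have hd2 : 0 < gam + z := by positivity
  have hd2' : 0 < gam + z' := by positivity
  have hlam' : 0 < lam' := lt_of_lt_of_le hlam hll
  have hR' : 0 ≤ R' := le_trans hR hRR
  calc z' - lam' / (1 + gam * z') ≤ z - lam' / (1 + gam * z) := by
        have : lam' / (1 + gam * z) ≤ lam' / (1 + gam * z') := by gcongr <;> linarith
        linarith
    _ ≤ z - lam / (1 + gam * z) + (lam / (1 + gam * z) - lam' / (1 + gam * z)) := le_of_eq (by ring)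
    _ ≤ gam * (lam * (1 + R) * gam / (gam + z) - 1) + 0 := by
        have : lam / (1 + gam * z) - lam' / (1 + gam * z) ≤ 0 := by
          apply sub_nonpos.2; gcongr
        linarith
    _ ≤ gam * (lam' * (1 + R') * gam / (gam + z') - 1) := by
        have : lam * (1 + R) * gam / (gam + z) ≤ lam' * (1 + R') * gam / (gam + z') := by
          gcongr <;> linarith
        nlinarith
end

section
/- For d ≥ 0 and 0 < λ with 2λ(1+d) < 1, define R̲(λ, d) = (1 − λ − √(1 − 2(1+d)λ))/λ. Then R̲ is monotone increasing in each argument: whenever 0 < λ ≤ λ', 0 ≤ d ≤ d', and 2λ'(1+d') < 1, one has R̲(λ, d) ≤ R̲(λ', d'). -/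
/-- Claim in Proposition `Welfare` Part 3 (first half): the lower threshold
`R̲(λ,d) = (1 − λ − √(1 − 2(1+d)λ))/λ` is monotone increasing in `λ` and in `d`. -/
theorem Rlow_monotone (lam lam' d d' : ℝ)
    (hlam : 0 < lam) (hll : lam ≤ lam') (hd : 0 ≤ d) (hdd : d ≤ d')
    (hdisc : 2 * lam' * (1 + d') < 1) :
    (1 - lam - Real.sqrt (1 - 2 * (1 + d) * lam)) / lam ≤
      (1 - lam' - Real.sqrt (1 - 2 * (1 + d') * lam')) / lam' := by
  set s := Real.sqrt (1 - 2 * (1 + d) * lam) with hsdef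
  set s' := Real.sqrt (1 - 2 * (1 + d') * lam') with hs'def
  have hlam' : 0 < lam' := lt_of_lt_of_le hlam hll
  have harg' : 0 < 1 - 2 * (1 + d') * lam' := by nlinarith
  have harg : 0 < 1 - 2 * (1 + d) * lam := by nlinarith
  have hs : s ^ 2 = 1 - 2 * (1 + d) * lam := Real.sq_sqrt harg.le
  have hs' : s' ^ 2 = 1 - 2 * (1 + d') * lam' := Real.sq_sqrt harg'.le
  have hs0 : 0 ≤ s := Real.sqrt_nonneg _
  have hs'0 : 0 ≤ s' := Real.sqrt_nonneg _
  have hss : s' ≤ s := Real.sqrt_le_sqrt (by nlinarith)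
  have hl2 : lam' < 1 / 2 := by nlinarith
  have hden : 0 < 1 - lam + s := by nlinarith
  have hden' : 0 < 1 - lam' + s' := by nlinarith
  have e1 : (1 - lam - s) / lam = (lam + 2 * d) / (1 - lam + s) := by
    rw [div_eq_div_iff hlam.ne' hden.ne']; nlinarith [hs]
  have e2 : (1 - lam' - s') / lam' = (lam' + 2 * d') / (1 - lam' + s') := by
    rw [div_eq_div_iff hlam'.ne' hden'.ne']; nlinarith [hs']
  rw [e1, e2, div_le_div_iff₀ hden hden']
  nlinarith [mul_le_mul (by linarith : lam + 2 * d ≤ lam' + 2 * d')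
    (by linarith : 1 - lam' + s' ≤ 1 - lam + s) hden'.le (by linarith : (0:ℝ) ≤ lam' + 2 * d')]
end
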